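/- arXiv:1104.0287 — 2 statements merged into one kernel-verified Lean document; each statement's English description precedes it below -/
import Mathlib

section
/- If R is a continuous and open n-to-m correspondence between topological spaces X and Y (i.e., every fiber R⁻¹({y}) has at most n points and every R({x}) has at most m points), then X and Y have the same Cantor-Bendixson rank. -/
open Set

/-- The Cantor derivative of a subset `A` of a space, relative to the subspace topology:
points of `A` that do not lie in a finite relatively-open subset of `A`. -/
def sderiv {X : Type*} [TopologicalSpace X] (A : Set X) : Set X :=
  {x | x ∈ A ∧ ∀ U : Set X, IsOpen U → x ∈ U → (U ∩ A).Infinite}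

/-- Iterated Cantor derivative of a subset. `cbIter A α` is `A^α`. -/
noncomputable def cbIter {X : Type*} [TopologicalSpace X] (A : Set X) (o : Ordinal) : Set X :=
  Ordinal.limitRecOn o A (fun _ ih => sderiv ih)
    (fun o _ ih => ⋂ (β : Ordinal), ⋂ (h : β < o), ih β h)

/-- `ρ` is the Cantor-Bendixson rank of `X`. -/
def IsCBRank (X : Type*) [TopologicalSpace X] (ρ : Ordinal) : Prop :=
  cbIter (Set.univ : Set X) ρ = ∅ ∧ ∀ β < ρ, cbIter (Set.univ : Set X) β ≠ ∅

theorem cbIter_zero {X : Type*} [TopologicalSpace X] (A : Set X) : cbIter A 0 = A :=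
  Ordinal.limitRecOn_zero _ _ _

theorem cbIter_succ {X : Type*} [TopologicalSpace X] (A : Set X) (o : Ordinal) :
    cbIter A (Order.succ o) = sderiv (cbIter A o) :=
  Ordinal.limitRecOn_succ _ _ _ _

theorem cbIter_limit {X : Type*} [TopologicalSpace X] (A : Set X) {o : Ordinal}
    (h : Order.IsSuccLimit o) : cbIter A o = ⋂ (β : Ordinal), ⋂ (_ : β < o), cbIter A β :=
  Ordinal.limitRecOn_limit _ _ _ _ h

/-- One-step transfer of the Cantor derivative across a continuous correspondence
with finite fibers. -/
theorem sderiv_transfer {X Y : Type*} [TopologicalSpace X] [TopologicalSpace Y]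
    (R : X → Y → Prop)
    (hcont : ∀ O : Set Y, IsOpen O → IsOpen {x | ∃ y ∈ O, R x y})
    (hfib : ∀ y, {x | R x y}.Finite)
    {A : Set X} {B : Set Y} (hAB : ∀ x y, R x y → (x ∈ A ↔ y ∈ B)) :
    ∀ x y, R x y → x ∈ sderiv A → y ∈ sderiv B := by
  intro x y hxy hx
  obtain ⟨hxA, hA⟩ := hx
  refine ⟨(hAB x y hxy).1 hxA, ?_⟩
  intro V hV hyV
  have hU : IsOpen {x' | ∃ y' ∈ V, R x' y'} := hcont V hV
  have hxU : x ∈ {x' | ∃ y' ∈ V, R x' y'} := ⟨y, hyV, hxy⟩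
  have hinf := hA _ hU hxU
  by_contra hfin
  rw [Set.not_infinite] at hfin
  have hsub : {x' | ∃ y' ∈ V, R x' y'} ∩ A ⊆ ⋃ y' ∈ V ∩ B, {x' | R x' y'} := by
    rintro x' ⟨⟨y', hy'V, hr⟩, hx'A⟩
    exact Set.mem_biUnion ⟨hy'V, (hAB x' y' hr).1 hx'A⟩ hr
  exact (Set.not_infinite.2 ((hfin.biUnion (fun y' _ => hfib y')).subset hsub)) hinf

/-- A continuous open n-to-m correspondence preserves the Cantor-Bendixson rank:
`X` and `Y` have the same Cantor-Bendixson rank. -/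
theorem continuous_open_finite_correspondence_CB_eq {X Y : Type*} [TopologicalSpace X]
    [TopologicalSpace Y] (R : X → Y → Prop) (n m : ℕ) (hn : 0 < n) (hm : 0 < m)
    (hsurjX : ∀ x, ∃ y, R x y) (hsurjY : ∀ y, ∃ x, R x y)
    (hcont : ∀ O : Set Y, IsOpen O → IsOpen {x | ∃ y ∈ O, R x y})
    (hopen : ∀ O : Set X, IsOpen O → IsOpen {y | ∃ x ∈ O, R x y})
    (hfibY : ∀ y, {x | R x y}.Finite ∧ ({x | R x y}).ncard ≤ n)
    (hfibX : ∀ x, {y | R x y}.Finite ∧ ({y | R x y}).ncard ≤ m) :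
    ∀ ρ : Ordinal, (IsCBRank X ρ ↔ IsCBRank Y ρ) := by
  -- the key invariant: related points enter the iterated derivatives simultaneously
  have key : ∀ o : Ordinal, ∀ x y, R x y →
      (x ∈ cbIter (Set.univ : Set X) o ↔ y ∈ cbIter (Set.univ : Set Y) o) := by
    intro o
    induction o using Ordinal.limitRecOn with
    | zero =>
      intro x y _
      rw [cbIter_zero, cbIter_zero]
      simp
    | add_one o ih =>
      intro x y hxy
      rw [← Order.succ_eq_add_one]
      rw [cbIter_succ, cbIter_succ]
      constructor
      · exact sderiv_transfer R hcont (fun y' => (hfibY y').1) ih x y hxy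
      · exact sderiv_transfer (fun y' x' => R x' y') hopen (fun x' => (hfibX x').1)
          (fun y' x' h => (ih x' y' h).symm) y x hxy
    | limit o ho ih =>
      intro x y hxy
      rw [cbIter_limit _ ho, cbIter_limit _ ho]
      simp only [Set.mem_iInter]
      exact ⟨fun h β hβ => (ih β hβ x y hxy).1 (h β hβ),
        fun h β hβ => (ih β hβ x y hxy).2 (h β hβ)⟩
  have empt : ∀ o : Ordinal,
      (cbIter (Set.univ : Set X) o = ∅ ↔ cbIter (Set.univ : Set Y) o = ∅) := by
    intro o
    constructor
    · intro h
      rw [Set.eq_empty_iff_forall_notMem] at h ⊢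
      intro y hy
      obtain ⟨x, hxy⟩ := hsurjY y
      exact h x ((key o x y hxy).2 hy)
    · intro h
      rw [Set.eq_empty_iff_forall_notMem] at h ⊢
      intro x hx
      obtain ⟨y, hxy⟩ := hsurjX x
      exact h y ((key o x y hxy).1 hx)
  intro ρ
  unfold IsCBRank
  constructor
  · rintro ⟨h1, h2⟩
    exact ⟨(empt ρ).1 h1, fun β hβ hc => h2 β hβ ((empt β).2 hc)⟩
  · rintro ⟨h1, h2⟩
    exact ⟨(empt ρ).2 h1, fun β hβ hc => h2 β hβ ((empt β).1 hc)⟩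
end

section
/- Every countable compact Hausdorff space is homeomorphic to some well-ordered set (an ordinal) equipped with its order topology. -/
open Set Topology Filter

universe u

namespace MS

variable {X : Type u} [TopologicalSpace X]

/-- Iterated Cantor–Bendixson derivative (relative to a set `A`). -/
noncomputable def CBD (A : Set X) (o : Ordinal.{0}) : Set X :=
  derivedSet (A ∩ ⋂ o' : Set.Iio o, CBD A o'.1)
termination_by o
decreasing_by exact o'.2

lemma CBD_def (A : Set X) (o : Ordinal.{0}) :
    CBD A o = derivedSet (A ∩ ⋂ o' : Set.Iio o, CBD A o'.1) := by
  rw [CBD]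

lemma derivedSet_subset {B : Set X} [T1Space X] : derivedSet B ⊆ closure B :=
  derivedSet_subset_closure B

lemma CBD_subset (A : Set X) (hA : IsClosed A) (o : Ordinal.{0}) [T1Space X] :
    CBD A o ⊆ A := by
  rw [CBD_def]
  refine (derivedSet_subset_closure _).trans ?_
  refine (closure_mono inter_subset_left).trans ?_
  rw [hA.closure_eq]

lemma CBD_isClosed (A : Set X) (o : Ordinal.{0}) [T1Space X] : IsClosed (CBD A o) := by
  rw [CBD_def]; exact isClosed_derivedSet _

lemma CBD_mono {A B : Set X} (h : A ⊆ B) (o : Ordinal.{0}) : CBD A o ⊆ CBD B o := by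
  induction o using Ordinal.induction with
  | _ o IH =>
    rw [CBD_def, CBD_def B]
    apply derivedSet_mono
    refine inter_subset_inter h (iInter_mono fun o' => IH o'.1 o'.2)

lemma CBD_anti (A : Set X) {o₁ o₂ : Ordinal.{0}} (h : o₁ ≤ o₂) : CBD A o₂ ⊆ CBD A o₁ := by
  rw [CBD_def A o₂, CBD_def A o₁]
  apply derivedSet_mono
  refine inter_subset_inter le_rfl ?_
  intro x hx
  simp only [Set.mem_iInter] at hx ⊢
  exact fun o' => hx ⟨o'.1, lt_of_lt_of_le o'.2 h⟩

end MS
namespace MS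
variable {X : Type u} [TopologicalSpace X]

lemma exists_isolated [T2Space X] [CompactSpace X] [Countable X]
    {B : Set X} (hB : IsClosed B) (hne : B.Nonempty) :
    ∃ x ∈ B, x ∉ derivedSet B := by
  haveI : CompactSpace ↥B := isCompact_iff_compactSpace.mp hB.isCompact
  haveI : Nonempty ↥B := hne.to_subtype
  obtain ⟨b, hb⟩ := nonempty_interior_of_iUnion_of_closed
    (f := fun b : ↥B => ({b} : Set ↥B)) (fun _ => isClosed_singleton)
    (by rw [← Set.iUnion_of_singleton (↥B)])
  have hopen : IsOpen ({b} : Set ↥B) := by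
    have hb' : b ∈ interior ({b} : Set ↥B) := by
      obtain ⟨x, hx⟩ := hb
      have hxb : x ∈ ({b} : Set ↥B) := interior_subset hx
      rw [Set.mem_singleton_iff] at hxb
      rwa [hxb] at hx
    have h1 : interior ({b} : Set ↥B) = {b} := by
      refine Set.Subset.antisymm interior_subset ?_
      intro y hy
      rw [Set.mem_singleton_iff] at hy
      rw [hy]
      exact hb'
    rw [← h1]; exact isOpen_interior
  rw [isOpen_induced_iff] at hopen
  obtain ⟨U, hU, hUe⟩ := hopen
  refine ⟨b.1, b.2, ?_⟩
  rw [mem_derivedSet, accPt_iff_nhds]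
  push_neg
  refine ⟨U, hU.mem_nhds ?_, ?_⟩
  · have : b ∈ (Subtype.val ⁻¹' U : Set ↥B) := by rw [hUe]; rfl
    exact this
  · rintro y ⟨hyU, hyB⟩
    have : (⟨y, hyB⟩ : ↥B) ∈ (Subtype.val ⁻¹' U : Set ↥B) := hyU
    rw [hUe] at this
    simpa using congrArg Subtype.val this

lemma CBD_succ [T1Space X] {A : Set X} (hA : IsClosed A) (o : Ordinal.{0}) :
    CBD A (o + 1) = derivedSet (CBD A o) := by
  have h : A ∩ ⋂ o' : Set.Iio (o+1), CBD A o'.1 = CBD A o := by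
    apply Set.Subset.antisymm
    · intro x hx
      exact Set.mem_iInter.mp hx.2 ⟨o, by rw [Ordinal.add_one_eq_succ]; exact Order.lt_succ o⟩
    · intro x hx
      refine ⟨CBD_subset A hA o hx, Set.mem_iInter.mpr ?_⟩
      rintro ⟨a, ha⟩
      have h3 : a < o + 1 := ha
      rw [Ordinal.add_one_eq_succ] at h3
      exact CBD_anti A (Order.lt_succ_iff.mp h3) hx
  rw [CBD_def A (o+1), h]

lemma CBD_eventually_empty [T2Space X] [CompactSpace X] [Countable X] :
    ∃ o : Ordinal.{0}, CBD (Set.univ : Set X) o = ∅ := by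
  by_contra h
  push_neg at h
  have key : ∀ o : Ordinal.{0}, ∃ x, x ∈ CBD (Set.univ : Set X) o ∧
      x ∉ CBD (Set.univ : Set X) (o + 1) := by
    intro o
    obtain ⟨x, hx1, hx2⟩ := exists_isolated (CBD_isClosed Set.univ o)
      (h o)
    exact ⟨x, hx1, by rw [CBD_succ isClosed_univ]; exact hx2⟩
  set Θ : Ordinal.{0} := (Cardinal.aleph 1).ord with hΘ
  let f : Set.Iio Θ → X := fun o => (key o.1).choose
  have hinj : Function.Injective f := by
    have hmain : ∀ o₁ o₂ : Set.Iio Θ, o₁.1 < o₂.1 → f o₁ ≠ f o₂ := by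
      intro o₁ o₂ hlt heq
      have h2 : f o₂ ∈ CBD (Set.univ : Set X) (o₁.1 + 1) := by
        refine CBD_anti _ ?_ (key o₂.1).choose_spec.1
        rwa [Ordinal.add_one_eq_succ, Order.succ_le_iff]
      rw [← heq] at h2
      exact (key o₁.1).choose_spec.2 h2
    intro o₁ o₂ heq
    rcases lt_trichotomy o₁.1 o₂.1 with h' | h' | h'
    · exact absurd heq (hmain _ _ h')
    · exact Subtype.ext h'
    · exact absurd heq.symm (hmain _ _ h')
  haveI : Countable (Set.Iio Θ) := hinj.countable
  have hc : Cardinal.mk (Set.Iio Θ) ≤ Cardinal.aleph0 := Cardinal.mk_le_aleph0_iff.mpr this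
  rw [Ordinal.mk_Iio_ordinal, hΘ, Cardinal.card_ord] at hc
  have h2 : Cardinal.lift.{1} Cardinal.aleph0 < Cardinal.lift.{1} (Cardinal.aleph 1) :=
    Cardinal.lift_lt.mpr Cardinal.aleph0_lt_aleph_one
  rw [Cardinal.lift_aleph0] at h2
  exact absurd (hc.trans_lt h2) (lt_irrefl _)

end MS
namespace MS
variable {X : Type u} [TopologicalSpace X]

lemma continuous_ordinal_add (a : Ordinal.{0}) : Continuous (fun x : Ordinal.{0} => a + x) :=
  (Order.isNormal_iff_strictMono_and_continuous.mp (Ordinal.isNormal_add_right a)).2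

/-- Glue two disjoint compact clopen-in-union pieces,
each homeomorphic to an ordinal interval, into an ordinal interval. -/
lemma glue2 [T2Space X] {A B : Set X} (hA : IsClosed A) (hB : IsClosed B)
    (hAc : IsCompact A) (hBc : IsCompact B) (hd : Disjoint A B) {a b : Ordinal.{0}}
    (fA : ↥A ≃ₜ ↥(Set.Iio a)) (fB : ↥B ≃ₜ ↥(Set.Iio b)) :
    Nonempty (↥(A ∪ B) ≃ₜ ↥(Set.Iio (a + b))) := by
  haveI : CompactSpace ↥(A ∪ B) := isCompact_iff_compactSpace.mp (hAc.union hBc)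
  classical
  -- the underlying function
  set G : ↥(A ∪ B) → Ordinal.{0} := fun x =>
    if h : x.1 ∈ A then (fA ⟨x.1, h⟩).1 else a + (fB ⟨x.1, x.2.resolve_left h⟩).1 with hG
  have hGA : ∀ (x : ↥(A ∪ B)) (h : x.1 ∈ A), G x = (fA ⟨x.1, h⟩).1 := by
    intro x h; simp only [hG, dif_pos h]
  have hGB : ∀ (x : ↥(A ∪ B)) (h : x.1 ∈ B), G x = a + (fB ⟨x.1, h⟩).1 := by
    intro x h
    have hxA : x.1 ∉ A := fun hxA => hd.ne_of_mem hxA h rfl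
    simp only [hG, dif_neg hxA]
  have hGlt : ∀ x, G x < a + b := by
    intro x
    by_cases h : x.1 ∈ A
    · rw [hGA x h]
      exact lt_of_lt_of_le (fA ⟨x.1, h⟩).2 (le_self_add (a := a) (b := b))
    · rw [hGB x (x.2.resolve_left h)]
      exact (add_lt_add_iff_left a).mpr (fB ⟨x.1, x.2.resolve_left h⟩).2
  have hinj : Function.Injective G := by
    intro x y hxy
    by_cases hx : x.1 ∈ A <;> by_cases hy : y.1 ∈ A
    · rw [hGA x hx, hGA y hy] at hxy
      have h2 := fA.injective (Subtype.ext hxy)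
      have h4 : x.1 = y.1 := Subtype.mk_eq_mk.mp h2
      exact Subtype.ext h4
    · rw [hGA x hx, hGB y (y.2.resolve_left hy)] at hxy
      have h2 : (fA ⟨x.1, hx⟩).1 < a := (fA ⟨x.1, hx⟩).2
      have h3 : a ≤ a + (fB ⟨y.1, y.2.resolve_left hy⟩).1 := le_self_add
      rw [hxy] at h2
      exact absurd h2 (not_lt.mpr h3)
    · rw [hGB x (x.2.resolve_left hx), hGA y hy] at hxy
      have h2 : (fA ⟨y.1, hy⟩).1 < a := (fA ⟨y.1, hy⟩).2
      have h3 : a ≤ a + (fB ⟨x.1, x.2.resolve_left hx⟩).1 := le_self_add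
      rw [hxy] at h3
      exact absurd h2 (not_lt.mpr h3)
    · rw [hGB x (x.2.resolve_left hx), hGB y (y.2.resolve_left hy)] at hxy
      have h2 : (fB ⟨x.1, x.2.resolve_left hx⟩).1 = (fB ⟨y.1, y.2.resolve_left hy⟩).1 :=
        (add_right_inj a).mp hxy
      have h3 := fB.injective (Subtype.ext h2)
      have h4 : x.1 = y.1 := Subtype.mk_eq_mk.mp h3
      exact Subtype.ext h4
  have hsurj : ∀ c : Ordinal.{0}, c < a + b → ∃ x, G x = c := by
    intro c hc
    by_cases hca : c < a
    · set w := fA.symm ⟨c, hca⟩ with hw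
      refine ⟨⟨w.1, Or.inl w.2⟩, ?_⟩
      rw [hGA ⟨w.1, Or.inl w.2⟩ w.2]
      have hww : (⟨w.1, w.2⟩ : ↥A) = w := rfl
      rw [hww, hw]
      simp
    · push_neg at hca
      have hsub : c - a < b := by
        have h1 : a + (c - a) = c := Ordinal.add_sub_cancel_of_le hca
        rw [← h1] at hc
        exact (add_lt_add_iff_left a).mp hc
      set w := fB.symm ⟨c - a, hsub⟩ with hw
      refine ⟨⟨w.1, Or.inr w.2⟩, ?_⟩
      rw [hGB ⟨w.1, Or.inr w.2⟩ w.2]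
      have hww : (⟨w.1, w.2⟩ : ↥B) = w := rfl
      rw [hww, hw]
      simp [Ordinal.add_sub_cancel_of_le hca]
  have hcont : Continuous G := by
    rw [continuous_iff_continuousAt]
    intro x
    have hSA : IsClosed (Subtype.val ⁻¹' A : Set ↥(A ∪ B)) := hA.preimage continuous_subtype_val
    have hSB : IsClosed (Subtype.val ⁻¹' B : Set ↥(A ∪ B)) := hB.preimage continuous_subtype_val
    have hcompl : (Subtype.val ⁻¹' A : Set ↥(A ∪ B)) = (Subtype.val ⁻¹' B)ᶜ := by
      ext y
      simp only [Set.mem_preimage, Set.mem_compl_iff]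
      constructor
      · exact fun h hB' => hd.ne_of_mem h hB' rfl
      · exact fun h => y.2.resolve_right h
    have hOA : IsOpen (Subtype.val ⁻¹' A : Set ↥(A ∪ B)) := by
      rw [hcompl]; exact hSB.isOpen_compl
    have hOB : IsOpen (Subtype.val ⁻¹' B : Set ↥(A ∪ B)) := by
      rw [← isClosed_compl_iff, ← hcompl]; exact hSA
    have hcontA : ContinuousOn G (Subtype.val ⁻¹' A) := by
      rw [continuousOn_iff_continuous_restrict]
      have : Set.domRestrict (Subtype.val ⁻¹' A) G =
          fun y => (fA ⟨y.1.1, y.2⟩).1 := by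
        funext y
        exact hGA y.1 y.2
      rw [this]
      exact continuous_subtype_val.comp (fA.continuous.comp
        (Continuous.subtype_mk (continuous_subtype_val.comp continuous_subtype_val) _))
    have hcontB : ContinuousOn G (Subtype.val ⁻¹' B) := by
      rw [continuousOn_iff_continuous_restrict]
      have : Set.domRestrict (Subtype.val ⁻¹' B) G =
          fun y => a + (fB ⟨y.1.1, y.2⟩).1 := by
        funext y
        exact hGB y.1 y.2
      rw [this]
      exact (continuous_ordinal_add a).comp (continuous_subtype_val.comp (fB.continuous.comp
        (Continuous.subtype_mk (continuous_subtype_val.comp continuous_subtype_val) _)))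
    by_cases hx : x.1 ∈ A
    · exact hcontA.continuousAt (hOA.mem_nhds hx)
    · exact hcontB.continuousAt (hOB.mem_nhds (x.2.resolve_left hx))
  -- assemble
  let e : ↥(A ∪ B) ≃ ↥(Set.Iio (a + b)) :=
    Equiv.ofBijective (fun x => ⟨G x, hGlt x⟩)
      ⟨fun x y hxy => hinj (congrArg Subtype.val hxy),
       fun c => by obtain ⟨x, hx⟩ := hsurj c.1 c.2; exact ⟨x, Subtype.ext hx⟩⟩
  have : Continuous (fun x => (⟨G x, hGlt x⟩ : ↥(Set.Iio (a + b)))) :=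
    hcont.subtype_mk _
  exact ⟨Continuous.homeoOfEquivCompactToT2 (f := e) this⟩

end MS
namespace MS
variable {X : Type u} [TopologicalSpace X]

/-- Glue countably many disjoint relatively-clopen pieces plus a point at infinity. -/
lemma glueomega [T2Space X] {K : Set X} (hK : IsClosed K) (hKc : IsCompact K)
    {p : X} (hp : p ∈ K) (C : ℕ → Set X)
    (hCsub : ∀ n, C n ⊆ K \ {p})
    (hCdisj : ∀ m n, m ≠ n → Disjoint (C m) (C n))
    (hCcover : K \ {p} ⊆ ⋃ n, C n)
    (hCclosed : ∀ n, IsClosed (C n))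
    (hCopen : ∀ n, ∃ O : Set X, IsOpen O ∧ C n = O ∩ K)
    (γ : ℕ → Ordinal.{0}) (f : ∀ n, ↥(C n) ≃ₜ ↥(Set.Iio (γ n))) :
    ∃ α : Ordinal.{0}, Nonempty (↥K ≃ₜ ↥(Set.Iio (α + 1))) := by
  classical
  haveI : CompactSpace ↥K := isCompact_iff_compactSpace.mp hKc
  -- partial sums
  set s : ℕ → Ordinal.{0} := fun n => Nat.rec (0 : Ordinal.{0}) (fun m acc => acc + γ m) n
    with hs
  have hs0 : s 0 = 0 := rfl
  have hssucc : ∀ n, s (n + 1) = s n + γ n := fun n => rfl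
  have hsmono : Monotone s := by
    apply monotone_nat_of_le_succ
    intro n
    rw [hssucc]
    exact le_self_add
  set L : Ordinal.{0} := ⨆ n, s n with hL
  have hsleL : ∀ n, s n ≤ L := fun n => Ordinal.le_iSup s n
  have hLlt : L < L + 1 := by
    rw [Ordinal.add_one_eq_succ]; exact Order.lt_succ L
  -- existence of a block for each non-peak point
  have hex : ∀ x : ↥K, x.1 ≠ p → ∃ n, x.1 ∈ C n := by
    intro x hxp
    have : x.1 ∈ ⋃ n, C n := hCcover ⟨x.2, hxp⟩
    exact Set.mem_iUnion.mp this
  -- the function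
  set G : ↥K → Ordinal.{0} := fun x =>
    if h : x.1 = p then L
    else s (Nat.find (hex x h)) + (f (Nat.find (hex x h)) ⟨x.1, Nat.find_spec (hex x h)⟩).1
    with hG
  have hGp : ∀ (x : ↥K) (_ : x.1 = p), G x = L := by
    intro x h; simp only [hG, dif_pos h]
  have hGC : ∀ (x : ↥K) (n : ℕ) (h : x.1 ∈ C n), G x = s n + (f n ⟨x.1, h⟩).1 := by
    intro x n h
    have hxp : x.1 ≠ p := fun heq => (hCsub n h).2 (by rw [heq]; rfl)
    have hfind : Nat.find (hex x hxp) = n := by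
      by_contra hne
      exact Set.disjoint_left.mp (hCdisj _ _ hne) (Nat.find_spec (hex x hxp)) h
    have hgen : ∀ (m : ℕ) (hmm : x.1 ∈ C m), m = n →
        s m + ((f m) ⟨x.1, hmm⟩).1 = s n + ((f n) ⟨x.1, h⟩).1 := by
      rintro m hmm rfl
      rfl
    simp only [hG, dif_neg hxp]
    exact hgen _ (Nat.find_spec (hex x hxp)) hfind
  have hGblock : ∀ (x : ↥K) (n : ℕ) (h : x.1 ∈ C n), s n ≤ G x ∧ G x < s (n + 1) := by
    intro x n h
    rw [hGC x n h, hssucc]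
    exact ⟨le_self_add, (add_lt_add_iff_left (s n)).mpr (f n ⟨x.1, h⟩).2⟩
  have hGle : ∀ x, G x ≤ L := by
    intro x
    by_cases h : x.1 = p
    · rw [hGp x h]
    · obtain ⟨n, hn⟩ := hex x h
      exact le_trans (hGblock x n hn).2.le (hsleL (n + 1))
  have hGlt : ∀ x, G x < L + 1 := fun x => lt_of_le_of_lt (hGle x) hLlt
  -- injectivity
  have hinj : Function.Injective G := by
    intro x y hxy
    by_cases hx : x.1 = p <;> by_cases hy : y.1 = p
    · exact Subtype.ext (by rw [hx, hy])
    · obtain ⟨n, hn⟩ := hex y hy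
      have h1 : G y < s (n + 1) := (hGblock y n hn).2
      rw [← hxy, hGp x hx] at h1
      exact absurd h1 (not_lt.mpr (hsleL (n + 1)))
    · obtain ⟨n, hn⟩ := hex x hx
      have h1 : G x < s (n + 1) := (hGblock x n hn).2
      rw [hxy, hGp y hy] at h1
      exact absurd h1 (not_lt.mpr (hsleL (n + 1)))
    · obtain ⟨m, hm⟩ := hex x hx
      obtain ⟨n, hn⟩ := hex y hy
      rcases lt_trichotomy m n with hmn | hmn | hmn
      · have h1 : G x < s (m + 1) := (hGblock x m hm).2
        have h2 : s n ≤ G y := (hGblock y n hn).1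
        rw [hxy] at h1
        exact absurd (h1.trans_le (le_trans (hsmono hmn) h2))
          (lt_irrefl _)
      · subst hmn
        rw [hGC x m hm, hGC y m hn] at hxy
        have h2 := (add_right_inj (s m)).mp hxy
        have h3 := (f m).injective (Subtype.ext h2)
        exact Subtype.ext (Subtype.mk_eq_mk.mp h3)
      · have h1 : G y < s (n + 1) := (hGblock y n hn).2
        have h2 : s m ≤ G x := (hGblock x m hm).1
        rw [hxy] at h2
        exact absurd (h1.trans_le (le_trans (hsmono hmn) h2))
          (lt_irrefl _)
  -- surjectivity
  have hsurj : ∀ c : Ordinal.{0}, c < L + 1 → ∃ x, G x = c := by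
    intro c hc
    have hcle : c ≤ L := by
      rw [Ordinal.add_one_eq_succ] at hc
      exact Order.lt_succ_iff.mp hc
    rcases eq_or_lt_of_le hcle with hceq | hclt
    · exact ⟨⟨p, hp⟩, by rw [hGp ⟨p, hp⟩ rfl, hceq]⟩
    · have hexn : ∃ n, c < s n := by
        rw [hL] at hclt
        exact Ordinal.lt_iSup_iff.mp hclt
      have hNspec : c < s (Nat.find hexn) := Nat.find_spec hexn
      have hN0 : Nat.find hexn ≠ 0 := by
        intro h0
        rw [h0, hs0] at hNspec
        exact absurd hNspec (not_lt_zero (a := c))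
      obtain ⟨n, hNeq⟩ : ∃ n, Nat.find hexn = n + 1 :=
        ⟨Nat.find hexn - 1, (Nat.succ_pred_eq_of_pos (Nat.pos_of_ne_zero hN0)).symm⟩
      rw [hNeq] at hNspec
      have hsn : s n ≤ c := by
        have := Nat.find_min hexn (by rw [hNeq]; exact Nat.lt_succ_self n)
        exact not_lt.mp this
      have hlt2 : c - s n < γ n := by
        have h1 : s n + (c - s n) = c := Ordinal.add_sub_cancel_of_le hsn
        rw [hssucc] at hNspec
        rw [← h1] at hNspec
        exact (add_lt_add_iff_left (s n)).mp hNspec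
      set w := (f n).symm ⟨c - s n, hlt2⟩ with hw
      refine ⟨⟨w.1, (hCsub n w.2).1⟩, ?_⟩
      rw [hGC ⟨w.1, (hCsub n w.2).1⟩ n w.2]
      have hww : (⟨w.1, w.2⟩ : ↥(C n)) = w := rfl
      rw [hww, hw]
      simp [Ordinal.add_sub_cancel_of_le hsn]
  -- continuity
  have hcont : Continuous G := by
    rw [continuous_iff_continuousAt]
    intro x
    by_cases hx : x.1 = p
    · -- continuity at the peak
      rw [ContinuousAt, hGp x hx]
      rw [tendsto_order]
      constructor
      · intro c hcL
        obtain ⟨n, hn⟩ := Ordinal.lt_iSup_iff.mp hcL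
        -- neighborhood: complement of the first n blocks
        set V : Set X := ⋃ m ∈ Finset.range n, C m with hV
        have hVclosed : IsClosed V := by
          apply Set.Finite.isClosed_biUnion (Finset.finite_toSet _)
          intro m _
          exact hCclosed m
        have hWopen : IsOpen ((Subtype.val ⁻¹' V : Set ↥K)ᶜ) :=
          (hVclosed.preimage continuous_subtype_val).isOpen_compl
        have hxW : x ∈ (Subtype.val ⁻¹' V : Set ↥K)ᶜ := by
          intro hxV
          simp only [Set.mem_preimage, hV, Set.mem_iUnion] at hxV
          obtain ⟨m, _, hm⟩ := hxV
          exact (hCsub m hm).2 (by rw [hx]; rfl)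
        refine Filter.eventually_iff_exists_mem.mpr ⟨_, hWopen.mem_nhds hxW, ?_⟩
        intro y hy
        by_cases hyp : y.1 = p
        · rw [hGp y hyp]; exact hn.trans_le (hsleL n)
        · obtain ⟨m, hm⟩ := hex y hyp
          have hmn : n ≤ m := by
            by_contra hlt
            push_neg at hlt
            exact hy (by
              simp only [Set.mem_preimage, hV, Set.mem_iUnion]
              exact ⟨m, Finset.mem_range.mpr hlt, hm⟩)
          calc c < s n := hn
            _ ≤ s m := hsmono hmn
            _ ≤ G y := (hGblock y m hm).1
      · intro c hcL
        refine Filter.Eventually.of_forall (fun y => lt_of_le_of_lt (hGle y) hcL)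
    · -- continuity on a block
      obtain ⟨n, hn⟩ := hex x hx
      obtain ⟨O, hO, hCO⟩ := hCopen n
      have hSopen : IsOpen (Subtype.val ⁻¹' C n : Set ↥K) := by
        have : (Subtype.val ⁻¹' C n : Set ↥K) = Subtype.val ⁻¹' O := by
          ext y
          simp only [Set.mem_preimage, hCO, Set.mem_inter_iff]
          exact ⟨fun h => h.1, fun h => ⟨h, y.2⟩⟩
        rw [this]
        exact hO.preimage continuous_subtype_val
      have hcontC : ContinuousOn G (Subtype.val ⁻¹' C n) := by
        rw [continuousOn_iff_continuous_restrict]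
        have hre : Set.domRestrict (Subtype.val ⁻¹' C n) G =
            fun y => s n + (f n ⟨y.1.1, y.2⟩).1 := by
          funext y
          exact hGC y.1 n y.2
        rw [hre]
        exact (continuous_ordinal_add (s n)).comp (continuous_subtype_val.comp
          ((f n).continuous.comp
            (Continuous.subtype_mk (continuous_subtype_val.comp continuous_subtype_val) _)))
      exact hcontC.continuousAt (hSopen.mem_nhds hn)
  refine ⟨L, ?_⟩
  let e : ↥K ≃ ↥(Set.Iio (L + 1)) :=
    Equiv.ofBijective (fun x => ⟨G x, hGlt x⟩)
      ⟨fun x y hxy => hinj (congrArg Subtype.val hxy),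
       fun c => by obtain ⟨x, hx⟩ := hsurj c.1 c.2; exact ⟨x, Subtype.ext hx⟩⟩
  exact ⟨Continuous.homeoOfEquivCompactToT2 (f := e) (hcont.subtype_mk _)⟩

end MS
namespace MS
variable {X : Type u} [TopologicalSpace X]

lemma finite_of_derivedSet_empty {T : Set X} (hTc : IsCompact T)
    (hT : derivedSet T = ∅) : T.Finite := by
  by_contra hinf
  have hinf' : T.Infinite := hinf
  obtain ⟨x, -, hx⟩ := hinf'.exists_accPt_of_subset_isCompact hTc subset_rfl
  exact absurd (hT ▸ (show x ∈ derivedSet T from hx) : x ∈ (∅ : Set X)) (Set.notMem_empty x)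

lemma totallySeparated_subtype [T2Space X] {K : Set X} (hKc : IsCompact K)
    [Countable X] : TotallySeparatedSpace ↥K := by
  haveI : CompactSpace ↥K := isCompact_iff_compactSpace.mp hKc
  rw [← loc_compact_t2_tot_disc_iff_tot_sep]
  constructor
  intro t _ hpre a ha b hb
  by_contra hne
  have hdisj : Disjoint ({a} : Set ↥K) {b} := by
    simp [Set.disjoint_singleton, hne]
  obtain ⟨g, hg0, hg1, -⟩ := exists_continuous_zero_one_of_isClosed
    isClosed_singleton isClosed_singleton hdisj
  have himg : IsPreconnected (g '' t) := hpre.image g g.continuous.continuousOn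
  have h0 : (0 : ℝ) ∈ g '' t := ⟨a, ha, hg0 rfl⟩
  have h1 : (1 : ℝ) ∈ g '' t := ⟨b, hb, hg1 rfl⟩
  have hIcc : Set.Icc (0 : ℝ) 1 ⊆ g '' t := himg.Icc_subset h0 h1
  have hcnt : (Set.Icc (0 : ℝ) 1).Countable :=
    Set.Countable.mono hIcc ((Set.to_countable t).image g)
  have hcard : Cardinal.mk (Set.Icc (0 : ℝ) 1) = Cardinal.continuum :=
    Cardinal.mk_Icc_real zero_lt_one
  rw [Set.countable_coe_iff.symm, ← Cardinal.mk_le_aleph0_iff, hcard] at hcnt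
  exact absurd hcnt (not_le.mpr Cardinal.aleph0_lt_continuum)

/-- Separation of two points of a closed set by a relatively clopen subset. -/
lemma relclopen_sep [T2Space X] [Countable X] {K : Set X} (hK : IsClosed K)
    (hKc : IsCompact K) {x y : X} (hx : x ∈ K) (hy : y ∈ K) (hxy : x ≠ y) :
    ∃ V : Set X, V ⊆ K ∧ IsClosed V ∧ (∃ O, IsOpen O ∧ V = O ∩ K) ∧ x ∈ V ∧ y ∉ V := by
  haveI := totallySeparated_subtype (X := X) hKc
  have hne : (⟨x, hx⟩ : ↥K) ≠ ⟨y, hy⟩ := fun h => hxy (Subtype.mk_eq_mk.mp h)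
  obtain ⟨U, hU, hxU, hyU⟩ := exists_isClopen_of_totally_separated hne
  refine ⟨Subtype.val '' U, ?_, ?_, ?_, ?_, ?_⟩
  · rintro v ⟨w, -, rfl⟩; exact w.2
  · exact (hK.isClosedEmbedding_subtypeVal.isClosedMap) U hU.1
  · obtain ⟨O, hO, hUO⟩ := isOpen_induced_iff.mp hU.2
    refine ⟨O, hO, ?_⟩
    rw [← hUO, Set.image_preimage_eq_inter_range, Subtype.range_coe]
  · exact ⟨⟨x, hx⟩, hxU, rfl⟩
  · rintro ⟨w, hw, hweq⟩
    apply hyU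
    have : w = ⟨y, hy⟩ := Subtype.ext hweq
    rwa [this] at hw

end MS
namespace MS
variable {X : Type u} [TopologicalSpace X]

/-- A homeomorphism between two empty spaces. -/
def homeoOfIsEmpty {A : Type*} {B : Type*} [TopologicalSpace A] [TopologicalSpace B]
    [IsEmpty A] [IsEmpty B] : A ≃ₜ B where
  toEquiv := Equiv.equivOfIsEmpty A B
  continuous_toFun := by
    rw [continuous_def]
    intro s _
    rw [Set.eq_empty_of_isEmpty (_ ⁻¹' s)]
    exact isOpen_empty
  continuous_invFun := by
    rw [continuous_def]
    intro s _
    rw [Set.eq_empty_of_isEmpty (_ ⁻¹' s)]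
    exact isOpen_empty

lemma isEmpty_Iio_zero : IsEmpty ↥(Set.Iio (0 : Ordinal.{0})) :=
  ⟨fun o' => not_lt_zero (a := o'.1) o'.2⟩

/-- The key "single peak" construction. -/
lemma peak [T2Space X] [CompactSpace X] [Countable X]
    (o : Ordinal.{0}) {K : Set X} (hK : IsClosed K) {p : X} (hp : p ∈ K)
    (hT : K ∩ ⋂ o' : Set.Iio o, CBD K o'.1 ⊆ {p})
    (IH : ∀ o' < o, ∀ C : Set X, IsClosed C → C.Nonempty → CBD C o' = ∅ →
      ∃ α : Ordinal.{0}, Nonempty (↥C ≃ₜ ↥(Set.Iio (α + 1)))) :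
    ∃ α : Ordinal.{0}, Nonempty (↥K ≃ₜ ↥(Set.Iio (α + 1))) := by
  classical
  haveI : CompactSpace ↥K := isCompact_iff_compactSpace.mp hK.isCompact
  by_cases hsing : K ⊆ {p}
  · -- singleton case
    refine ⟨0, ⟨Continuous.homeoOfEquivCompactToT2 (f := ?_) ?_⟩⟩
    · refine ⟨fun _ => ⟨0, ?_⟩, fun _ => ⟨p, hp⟩, ?_, ?_⟩
      · rw [Set.mem_Iio, zero_add, Ordinal.lt_one_iff_zero]
      · intro x
        exact Subtype.ext ((hsing x.2).symm)
      · intro y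
        refine Subtype.ext ?_
        have h2 : y.1 < (1 : Ordinal.{0}) := lt_of_lt_of_le y.2 (le_of_eq (zero_add 1))
        exact (Ordinal.lt_one_iff_zero.mp h2).symm
    · exact continuous_const
  · -- main case
    have ho : 0 < o := by
      rcases eq_zero_or_pos o with h0 | h0
      · exfalso
        haveI : IsEmpty ↥(Set.Iio o) := by
          rw [h0]; exact isEmpty_Iio_zero
        apply hsing
        intro x hx
        exact hT ⟨hx, by rw [Set.iInter_of_empty]; trivial⟩
      · exact h0
    haveI hne_idx : Nonempty ↥(Set.Iio o) := ⟨⟨0, ho⟩⟩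
    have hKpne : (K \ {p}).Nonempty := by
      by_contra hem
      rw [Set.not_nonempty_iff_eq_empty, Set.diff_eq_empty] at hem
      exact hsing hem
    obtain ⟨e, he⟩ := Set.Countable.exists_eq_range (Set.to_countable (K \ {p})) hKpne
    have heK : ∀ n, e n ∈ K \ {p} := fun n => by rw [he]; exact Set.mem_range_self n
    -- separating relatively clopen sets
    have hsep : ∀ n : ℕ, ∃ V : Set X, V ⊆ K ∧ IsClosed V ∧
        (∃ O, IsOpen O ∧ V = O ∩ K) ∧ e n ∈ V ∧ p ∉ V :=
      fun n => relclopen_sep hK hK.isCompact (heK n).1 hp (heK n).2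
    choose V hVsub hVclosed hVO hVmem hVp using hsep
    choose O hOopen hVOeq using hVO
    -- the disjointified blocks
    set C : ℕ → Set X := fun n => V n \ ⋃ m ∈ Finset.range n, V m with hC
    have hCsubV : ∀ n, C n ⊆ V n := fun n x hx => hx.1
    have hCsub : ∀ n, C n ⊆ K \ {p} := by
      intro n x hx
      refine ⟨hVsub n hx.1, fun hxp => ?_⟩
      rw [Set.mem_singleton_iff] at hxp
      rw [hxp] at hx
      exact hVp n hx.1
    have hCdisj : ∀ m n, m ≠ n → Disjoint (C m) (C n) := by
      have key : ∀ m n, m < n → Disjoint (C m) (C n) := by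
        intro m n hmn
        rw [Set.disjoint_left]
        intro x hxm hxn
        exact hxn.2 (Set.mem_biUnion (Finset.mem_range.mpr hmn) hxm.1)
      intro m n hmn
      rcases lt_or_gt_of_ne hmn with h | h
      · exact key m n h
      · exact (key n m h).symm
    have hCcover : K \ {p} ⊆ ⋃ n, C n := by
      intro x hx
      have hexV : ∃ n, x ∈ V n := by
        have : x ∈ Set.range e := by rw [← he]; exact hx
        obtain ⟨n₀, hn₀⟩ := this
        exact ⟨n₀, by rw [← hn₀]; exact hVmem n₀⟩
      refine Set.mem_iUnion.mpr ⟨Nat.find hexV, Nat.find_spec hexV, ?_⟩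
      intro hmem
      obtain ⟨m, hm1, hm2⟩ := Set.mem_iUnion₂.mp hmem
      exact Nat.find_min hexV (Finset.mem_range.mp hm1) hm2
    have hCclosed : ∀ n, IsClosed (C n) := by
      intro n
      have heq : C n = V n ∩ ⋂ m ∈ Finset.range n, (O m)ᶜ := by
        ext x
        simp only [hC, Set.mem_diff, Set.mem_iUnion, Set.mem_inter_iff, Set.mem_iInter,
          Set.mem_compl_iff, not_exists]
        constructor
        · rintro ⟨hxV, hxU⟩
          refine ⟨hxV, fun m hm hxO => hxU m hm ?_⟩
          rw [hVOeq m]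
          exact ⟨hxO, hVsub n hxV⟩
        · rintro ⟨hxV, hxO⟩
          refine ⟨hxV, fun m hm hxm => hxO m hm ?_⟩
          rw [hVOeq m] at hxm
          exact hxm.1
      rw [heq]
      exact (hVclosed n).inter (isClosed_biInter (fun m _ => (hOopen m).isClosed_compl))
    have hCopen : ∀ n, ∃ O' : Set X, IsOpen O' ∧ C n = O' ∩ K := by
      intro n
      refine ⟨O n ∩ ⋂ m ∈ Finset.range n, (V m)ᶜ,
        (hOopen n).inter ((Finset.finite_toSet _).isOpen_biInter
          (fun m _ => (hVclosed m).isOpen_compl)), ?_⟩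
      ext x
      simp only [hC, Set.mem_diff, Set.mem_iUnion, Set.mem_inter_iff, Set.mem_iInter,
        Set.mem_compl_iff, not_exists]
      constructor
      · rintro ⟨hxV, hxU⟩
        have hxK : x ∈ K := hVsub n hxV
        have hxO : x ∈ O n := by
          have := hxV; rw [hVOeq n] at this; exact this.1
        exact ⟨⟨hxO, fun m hm hxm => hxU m hm hxm⟩, hxK⟩
      · rintro ⟨⟨hxO, hxV⟩, hxK⟩
        refine ⟨by rw [hVOeq n]; exact ⟨hxO, hxK⟩, fun m hm hxm => hxV m hm hxm⟩
    -- per-block ordinal homeomorphisms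
    have hblock : ∀ n : ℕ, ∃ γ : Ordinal.{0}, Nonempty (↥(C n) ≃ₜ ↥(Set.Iio γ)) := by
      intro n
      by_cases hne : (C n).Nonempty
      · have hempty : C n ∩ ⋂ i : ↥(Set.Iio o), CBD (C n) i.1 = ∅ := by
          rw [Set.eq_empty_iff_forall_notMem]
          rintro x ⟨hxC, hxI⟩
          have hxp : x ∈ ({p} : Set X) := by
            refine hT ⟨(hCsub n hxC).1, Set.mem_iInter.mpr fun i => ?_⟩
            exact CBD_mono (fun y hy => (hCsub n hy).1) i.1 (Set.mem_iInter.mp hxI i)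
          exact (hCsub n hxC).2 hxp
        obtain ⟨i, hi⟩ := (hCclosed n).isCompact.elim_directed_family_closed
          (fun i : ↥(Set.Iio o) => CBD (C n) i.1) (fun i => CBD_isClosed _ _) hempty
          (by
            intro i j
            rcases le_total i.1 j.1 with h | h
            · exact ⟨j, CBD_anti _ h, subset_rfl⟩
            · exact ⟨i, subset_rfl, CBD_anti _ h⟩)
        have hCBDe : CBD (C n) i.1 = ∅ := by
          rw [Set.eq_empty_iff_forall_notMem]
          intro x hx
          rw [Set.eq_empty_iff_forall_notMem] at hi
          exact hi x ⟨CBD_subset _ (hCclosed n) _ hx, hx⟩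
        obtain ⟨α, hα⟩ := IH i.1 i.2 (C n) (hCclosed n) hne hCBDe
        exact ⟨α + 1, hα⟩
      · rw [Set.not_nonempty_iff_eq_empty] at hne
        haveI h1 : IsEmpty ↥(C n) := by rw [hne]; exact Set.isEmpty_coe_sort.mpr rfl
        haveI h2 := isEmpty_Iio_zero
        exact ⟨0, ⟨homeoOfIsEmpty⟩⟩
    choose γ hγ using hblock
    exact glueomega hK hK.isCompact hp C hCsub hCdisj hCcover hCclosed hCopen γ
      (fun n => (hγ n).some)

end MS
namespace MS
variable {X : Type u} [TopologicalSpace X]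

lemma multipeak [T2Space X] [CompactSpace X] [Countable X]
    (o : Ordinal.{0})
    (IH : ∀ o' < o, ∀ C : Set X, IsClosed C → C.Nonempty → CBD C o' = ∅ →
      ∃ α : Ordinal.{0}, Nonempty (↥C ≃ₜ ↥(Set.Iio (α + 1)))) :
    ∀ (S : Finset X) (K : Set X), IsClosed K → K.Nonempty →
      (K ∩ ⋂ o' : Set.Iio o, CBD K o'.1 ⊆ ↑S) →
      ∃ α : Ordinal.{0}, Nonempty (↥K ≃ₜ ↥(Set.Iio (α + 1))) := by
  classical
  intro S
  induction S using Finset.strongInduction with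
  | _ S IHS =>
    intro K hK hKne hTS
    by_cases hTne : (K ∩ ⋂ o' : Set.Iio o, CBD K o'.1).Nonempty
    · -- there is a top point p
      obtain ⟨p, hpT⟩ := hTne
      have hpK : p ∈ K := hpT.1
      have hpS : p ∈ S := hTS hpT
      -- separating sets (total functions)
      have hsep : ∀ q : X, ∃ V : Set X, V ⊆ K ∧ IsClosed V ∧
          (∃ O, IsOpen O ∧ V = O ∩ K) ∧ p ∈ V ∧ (q ∈ S.erase p → q ∉ V) := by
        intro q
        by_cases hq : q ∈ S.erase p ∧ q ∈ K
        · obtain ⟨V, h1, h2, h3, h4, h5⟩ := relclopen_sep hK hK.isCompact hpK hq.2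
            (Finset.ne_of_mem_erase hq.1).symm
          exact ⟨V, h1, h2, h3, h4, fun _ => h5⟩
        · refine ⟨K, subset_rfl, hK, ⟨Set.univ, isOpen_univ, (Set.univ_inter K).symm⟩, hpK, ?_⟩
          intro hq1 hq2
          exact hq ⟨hq1, hq2⟩
      choose V hVsub hVcl hVO hVp hVq using hsep
      choose O hOopen hVOeq using hVO
      set W : Set X := K ∩ ⋂ q ∈ (S.erase p : Finset X), V q with hW
      have hWsub : W ⊆ K := Set.inter_subset_left
      have hWcl : IsClosed W :=
        hK.inter (isClosed_biInter (fun q _ => hVcl q))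
      have hpW : p ∈ W := ⟨hpK, Set.mem_iInter₂.mpr fun q _ => hVp q⟩
      have hWrel : W = (⋂ q ∈ (S.erase p : Finset X), O q) ∩ K := by
        ext x
        simp only [hW, Set.mem_inter_iff, Set.mem_iInter]
        constructor
        · rintro ⟨hxK, hxV⟩
          refine ⟨fun q hq => ?_, hxK⟩
          have := hxV q hq
          rw [hVOeq q] at this
          exact this.1
        · rintro ⟨hxO, hxK⟩
          refine ⟨hxK, fun q hq => ?_⟩
          rw [hVOeq q]
          exact ⟨hxO q hq, hxK⟩
      have hOWopen : IsOpen (⋂ q ∈ (S.erase p : Finset X), O q) :=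
        (Finset.finite_toSet _).isOpen_biInter (fun q _ => hOopen q)
      -- apply the peak lemma to W
      have hTW : W ∩ ⋂ o' : Set.Iio o, CBD W o'.1 ⊆ {p} := by
        rintro x ⟨hxW, hxI⟩
        have hxK : x ∈ K := hWsub hxW
        have hxT : x ∈ K ∩ ⋂ o' : Set.Iio o, CBD K o'.1 :=
          ⟨hxK, Set.mem_iInter.mpr fun i => CBD_mono hWsub i.1 (Set.mem_iInter.mp hxI i)⟩
        have hxS : x ∈ S := hTS hxT
        by_contra hxp
        rw [Set.mem_singleton_iff] at hxp
        have hxe : x ∈ S.erase p := Finset.mem_erase.mpr ⟨hxp, hxS⟩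
        have hxV : x ∈ V x := Set.mem_iInter₂.mp hxW.2 x hxe
        exact hVq x hxe hxV
      obtain ⟨a, ⟨ga⟩⟩ := peak o hWcl hpW hTW IH
      -- the rest
      set K' : Set X := K \ W with hK'
      have hK'cl : IsClosed K' := by
        have : K' = K ∩ (⋂ q ∈ (S.erase p : Finset X), O q)ᶜ := by
          ext x
          simp only [hK', Set.mem_diff, Set.mem_inter_iff, Set.mem_compl_iff]
          constructor
          · rintro ⟨hxK, hxW⟩
            refine ⟨hxK, fun hxO => hxW ?_⟩
            rw [hWrel]
            exact ⟨hxO, hxK⟩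
          · rintro ⟨hxK, hxO⟩
            refine ⟨hxK, fun hxW => hxO ?_⟩
            rw [hWrel] at hxW
            exact hxW.1
        rw [this]
        exact hK.inter hOWopen.isClosed_compl
      by_cases hK'ne : K'.Nonempty
      · -- recurse on the rest
        have hTK' : K' ∩ ⋂ o' : Set.Iio o, CBD K' o'.1 ⊆ ↑(S.erase p) := by
          rintro x ⟨hxK', hxI⟩
          have hxS : x ∈ S := hTS ⟨hxK'.1,
            Set.mem_iInter.mpr fun i =>
              CBD_mono (Set.diff_subset) i.1 (Set.mem_iInter.mp hxI i)⟩
          have hxp : x ≠ p := fun h => hxK'.2 (h ▸ hpW)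
          exact Finset.mem_coe.mpr (Finset.mem_erase.mpr ⟨hxp, hxS⟩)
        obtain ⟨b, ⟨gb⟩⟩ := IHS (S.erase p) (Finset.erase_ssubset hpS) K' hK'cl hK'ne hTK'
        have hdisj : Disjoint W K' := Set.disjoint_left.mpr (fun x hxW hxK' => hxK'.2 hxW)
        obtain ⟨g⟩ := glue2 hWcl hK'cl hWcl.isCompact hK'cl.isCompact hdisj ga gb
        have hunion : W ∪ K' = K := by
          rw [hK', Set.union_diff_cancel' subset_rfl hWsub]
        have hord : (a + 1) + (b + 1) = ((a + 1) + b) + 1 := (add_assoc _ _ _).symm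
        refine ⟨(a + 1) + b, ⟨?_⟩⟩
        exact (Homeomorph.setCongr hunion).symm.trans
          (g.trans (Homeomorph.setCongr (by rw [hord])))
      · -- W is everything
        rw [Set.not_nonempty_iff_eq_empty, hK', Set.diff_eq_empty] at hK'ne
        have : W = K := Set.Subset.antisymm hWsub hK'ne
        exact ⟨a, ⟨(Homeomorph.setCongr this).symm.trans ga⟩⟩
    · -- no top point: some earlier derivative already vanishes
      have ho : 0 < o := by
        rcases eq_zero_or_pos o with h0 | h0
        · exfalso
          apply hTne
          haveI : IsEmpty ↥(Set.Iio o) := by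
            rw [h0]; exact isEmpty_Iio_zero
          obtain ⟨x, hx⟩ := hKne
          exact ⟨x, hx, by rw [Set.iInter_of_empty]; trivial⟩
        · exact h0
      haveI : Nonempty ↥(Set.Iio o) := ⟨⟨0, ho⟩⟩
      rw [Set.not_nonempty_iff_eq_empty] at hTne
      obtain ⟨i, hi⟩ := hK.isCompact.elim_directed_family_closed
        (fun i : ↥(Set.Iio o) => CBD K i.1) (fun i => CBD_isClosed _ _) hTne
        (by
          intro i j
          rcases le_total i.1 j.1 with h | h
          · exact ⟨j, CBD_anti _ h, subset_rfl⟩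
          · exact ⟨i, subset_rfl, CBD_anti _ h⟩)
      have hCBDe : CBD K i.1 = ∅ := by
        rw [Set.eq_empty_iff_forall_notMem]
        intro x hx
        rw [Set.eq_empty_iff_forall_notMem] at hi
        exact hi x ⟨CBD_subset _ hK _ hx, hx⟩
      exact IH i.1 i.2 K hK hKne hCBDe

theorem main [T2Space X] [CompactSpace X] [Countable X] :
    ∀ o : Ordinal.{0}, ∀ K : Set X, IsClosed K → K.Nonempty → CBD K o = ∅ →
      ∃ α : Ordinal.{0}, Nonempty (↥K ≃ₜ ↥(Set.Iio (α + 1))) := by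
  intro o
  induction o using Ordinal.induction with
  | _ o IH =>
    intro K hK hKne hCBD
    have hTfin : (K ∩ ⋂ o' : Set.Iio o, CBD K o'.1).Finite := by
      apply finite_of_derivedSet_empty
      · exact (hK.inter (isClosed_iInter fun (i : ↥(Set.Iio o)) => CBD_isClosed K i.1)).isCompact
      · rw [← CBD_def]
        exact hCBD
    exact multipeak o IH hTfin.toFinset K hK hKne
      (by rw [Set.Finite.coe_toFinset])

end MS
/-- Mazurkiewicz–Sierpiński: every countable compact Hausdorff space is homeomorphic to
some ordinal (i.e. the set of ordinals below it) with the order topology. -/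
theorem countable_compact_T2_homeomorph_ordinal (X : Type*) [TopologicalSpace X]
    [CompactSpace X] [T2Space X] [Countable X] :
    ∃ α : Ordinal.{0}, Nonempty (X ≃ₜ (Set.Iio α)) := by
  rcases isEmpty_or_nonempty X with h | h
  · refine ⟨0, ⟨?_⟩⟩
    haveI := MS.isEmpty_Iio_zero
    exact MS.homeoOfIsEmpty
  · obtain ⟨o, ho⟩ := MS.CBD_eventually_empty (X := X)
    obtain ⟨α, ⟨g⟩⟩ := MS.main o Set.univ isClosed_univ Set.univ_nonempty ho
    exact ⟨α + 1, ⟨(Homeomorph.Set.univ X).symm.trans g⟩⟩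
end
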